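/- Under the stated cell-problem orthogonality hypotheses, the effective viscosity tensor satisfies the Legendre–Hadamard (strong ellipticity) condition: there exists λ > 0 such that for all ζ, η ∈ ℝ^d, Σ_{i,j,m,n} N^{ij}_{mn} ζ_i ζ_m η_j η_n ≥ λ |ζ|² |η|². -/

import Mathlib

open MeasureTheory Finset

noncomputable section

/-- The symmetrized gradient `D(v) = (∇v + ∇vᵀ)/2` of a vector field `v : ℝ^d → ℝ^d`. -/
def symGrad {d : ℕ} (v : EuclideanSpace ℝ (Fin d) → EuclideanSpace ℝ (Fin d))
    (y : EuclideanSpace ℝ (Fin d)) : Matrix (Fin d) (Fin d) ℝ :=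
  fun m n =>
    (fderiv ℝ v y (EuclideanSpace.single m 1) n + fderiv ℝ v y (EuclideanSpace.single n 1) m) / 2

/-- The Frobenius inner product `A : B` of two `d × d` matrices. -/
def frob {d : ℕ} (A B : Matrix (Fin d) (Fin d) ℝ) : ℝ := ∑ m, ∑ n, A m n * B m n

/-- The field `P^{ij}` given by `(P^{ij}(y))_k = y_j δ_{ik}`. -/
def Pfield {d : ℕ} (i j : Fin d) (y : EuclideanSpace ℝ (Fin d)) : EuclideanSpace ℝ (Fin d) :=
  EuclideanSpace.single i (y j)

lemma euclid_sum_apply {ι : Type*} (s : Finset ι) (f : ι → EuclideanSpace ℝ (Fin d)) (k : Fin d) :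
    (∑ p ∈ s, f p) k = ∑ p ∈ s, f p k :=
  map_sum (EuclideanSpace.proj k : EuclideanSpace ℝ (Fin d) →L[ℝ] ℝ) f s

lemma basis_expand (x : EuclideanSpace ℝ (Fin d)) :
    ∑ n, x n • EuclideanSpace.single n (1:ℝ) = x := by
  ext k
  rw [euclid_sum_apply]
  simp [EuclideanSpace.single_apply]

def PCLM (i j : Fin d) : EuclideanSpace ℝ (Fin d) →L[ℝ] EuclideanSpace ℝ (Fin d) :=
  (EuclideanSpace.proj j).smulRight (EuclideanSpace.single i 1)

lemma Pfield_eq (i j : Fin d) : Pfield i j = ⇑(PCLM i j) := by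
  funext y; ext k
  simp [Pfield, PCLM, EuclideanSpace.single_apply]

lemma contDiff_Pfield_sub (i j : Fin d) (v : EuclideanSpace ℝ (Fin d) → EuclideanSpace ℝ (Fin d))
    (hv : ContDiff ℝ 1 v) : ContDiff ℝ 1 (fun z => Pfield i j z - v z) := by
  rw [Pfield_eq]
  exact ((PCLM i j).contDiff).sub hv

lemma fderiv_Pfield (i j : Fin d) (y : EuclideanSpace ℝ (Fin d)) :
    fderiv ℝ (Pfield i j) y = PCLM i j := by
  rw [Pfield_eq]; exact (PCLM i j).fderiv

lemma symGrad_Pfield (i j m n : Fin d) (y : EuclideanSpace ℝ (Fin d)) :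
    symGrad (Pfield i j) y m n
      = ((if m = i then (if n = j then (1:ℝ) else 0) else 0)
        + (if n = i then (if m = j then (1:ℝ) else 0) else 0)) / 2 := by
  simp only [symGrad, fderiv_Pfield]
  simp [PCLM, EuclideanSpace.single_apply]
  by_cases h1 : m = i <;> by_cases h2 : n = j <;> by_cases h3 : n = i <;> by_cases h4 : m = j <;>
    simp_all <;> aesop

lemma symGrad_symm (v : EuclideanSpace ℝ (Fin d) → EuclideanSpace ℝ (Fin d))
    (y : EuclideanSpace ℝ (Fin d)) (m n : Fin d) : symGrad v y m n = symGrad v y n m := by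
  simp [symGrad, add_comm]

lemma symGrad_sub_apply (i j : Fin d) (v : EuclideanSpace ℝ (Fin d) → EuclideanSpace ℝ (Fin d))
    (hv : ContDiff ℝ 1 v) (y : EuclideanSpace ℝ (Fin d)) (m n : Fin d) :
    symGrad (fun z => Pfield i j z - v z) y m n
      = symGrad (Pfield i j) y m n - symGrad v y m n := by
  have hP : DifferentiableAt ℝ (Pfield i j) y := by
    rw [Pfield_eq]; exact (PCLM i j).differentiable.differentiableAt
  have hv' : DifferentiableAt ℝ v y := (hv.differentiable one_ne_zero).differentiableAt
  have h : fderiv ℝ (fun z => Pfield i j z - v z) y = fderiv ℝ (Pfield i j) y - fderiv ℝ v y :=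
    fderiv_sub hP hv'
  simp only [symGrad, h, ContinuousLinearMap.sub_apply, PiLp.sub_apply]
  ring

lemma symGrad_sum_smul {ι : Type*} [Fintype ι] (c : ι → ℝ)
    (w : ι → EuclideanSpace ℝ (Fin d) → EuclideanSpace ℝ (Fin d))
    (hw : ∀ p, ContDiff ℝ 1 (w p)) (y : EuclideanSpace ℝ (Fin d)) (m n : Fin d) :
    symGrad (fun z => ∑ p, c p • w p z) y m n = ∑ p, c p * symGrad (w p) y m n := by
  have hdf : ∀ p, DifferentiableAt ℝ (w p) y :=
    fun p => ((hw p).differentiable one_ne_zero).differentiableAt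
  have h1 : fderiv ℝ (fun z => ∑ p, c p • w p z) y = ∑ p, c p • fderiv ℝ (w p) y := by
    rw [fderiv_fun_sum (A := fun p z => c p • w p z) (fun p _ => (hdf p).const_smul (c p))]
    exact Finset.sum_congr rfl fun p _ => fderiv_const_smul (hdf p) (c p)
  simp only [symGrad, h1, ContinuousLinearMap.sum_apply, ContinuousLinearMap.smul_apply,
    euclid_sum_apply, PiLp.smul_apply, smul_eq_mul]
  rw [← Finset.sum_add_distrib, Finset.sum_div]
  exact Finset.sum_congr rfl fun p _ => by ring

lemma continuous_symGrad_entry (v : EuclideanSpace ℝ (Fin d) → EuclideanSpace ℝ (Fin d))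
    (hv : ContDiff ℝ 1 v) (m n : Fin d) : Continuous fun y => symGrad v y m n := by
  have hfd : Continuous (fderiv ℝ v) := hv.continuous_fderiv one_ne_zero
  have h : ∀ (u : EuclideanSpace ℝ (Fin d)) (k : Fin d),
      Continuous fun y => fderiv ℝ v y u k := fun u k =>
    (EuclideanSpace.proj k).continuous.comp (hfd.clm_apply continuous_const)
  exact (((h _ n).add (h _ m)).div_const 2)

lemma box_open : IsOpen {y : EuclideanSpace ℝ (Fin d) | ∀ i, y i ∈ Set.Ioo (0:ℝ) 1} := by
  have : {y : EuclideanSpace ℝ (Fin d) | ∀ i, y i ∈ Set.Ioo (0:ℝ) 1}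
      = ⋂ i, (fun y : EuclideanSpace ℝ (Fin d) => y i) ⁻¹' Set.Ioo (0:ℝ) 1 := by
    ext y; simp
  rw [this]
  exact isOpen_iInter_of_finite fun i =>
    (isOpen_Ioo).preimage (EuclideanSpace.proj i).continuous

lemma box_bounded :
    {y : EuclideanSpace ℝ (Fin d) | ∀ i, y i ∈ Set.Ioo (0:ℝ) 1}
      ⊆ Metric.closedBall 0 (d + 1) := by
  intro y hy
  simp only [Metric.mem_closedBall, dist_zero_right]
  rw [EuclideanSpace.norm_eq]
  have h1 : ∑ i, ‖y i‖ ^ 2 ≤ (d:ℝ) := by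
    calc ∑ i, ‖y i‖ ^ 2 ≤ ∑ _i : Fin d, (1:ℝ) := by
          refine Finset.sum_le_sum fun i _ => ?_
          have := hy i
          rw [Real.norm_eq_abs, sq_abs]
          nlinarith [this.1, this.2]
      _ = d := by simp
  calc Real.sqrt (∑ i, ‖y i‖ ^ 2) ≤ Real.sqrt ((d:ℝ)) := Real.sqrt_le_sqrt h1
    _ ≤ (d:ℝ) + 1 := by
        have h2 : Real.sqrt ((d:ℝ)) ^ 2 = (d:ℝ) := Real.sq_sqrt (by positivity)
        nlinarith [Real.sqrt_nonneg ((d:ℝ))]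

lemma integrableOn_box {f : EuclideanSpace ℝ (Fin d) → ℝ} (hf : Continuous f) :
    IntegrableOn f {y : EuclideanSpace ℝ (Fin d) | ∀ i, y i ∈ Set.Ioo (0:ℝ) 1} volume :=
  ((hf.continuousOn).integrableOn_compact (isCompact_closedBall 0 (d+1))).mono_set box_bounded

lemma zero_on_open {s : Set (EuclideanSpace ℝ (Fin d))} (hs : IsOpen s)
    {f : EuclideanSpace ℝ (Fin d) → ℝ} (hf : Continuous f) (hnn : ∀ x, 0 ≤ f x)
    (hint : IntegrableOn f s volume) (h0 : ∫ x in s, f x = 0) :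
    ∀ x ∈ s, f x = 0 := by
  intro x hx
  by_contra hne
  have hpos : 0 < f x := lt_of_le_of_ne (hnn x) (Ne.symm hne)
  have hae : f =ᶠ[ae (volume.restrict s)] 0 :=
    (setIntegral_eq_zero_iff_of_nonneg_ae (Filter.Eventually.of_forall fun y => hnn y) hint).mp h0
  set U := s ∩ f ⁻¹' Set.Ioi (f x / 2) with hU
  have hUopen : IsOpen U := hs.inter ((isOpen_Ioi).preimage hf)
  have hxU : x ∈ U := ⟨hx, by simp; linarith⟩
  have hUpos : 0 < volume U := hUopen.measure_pos volume ⟨x, hxU⟩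
  have hsub : U ⊆ {y | f y ≠ 0} := fun y hy => by
    have := hy.2
    simp only [Set.mem_preimage, Set.mem_Ioi] at this
    intro h; rw [h] at this; linarith
  have : volume.restrict s {y | f y ≠ 0} = 0 := by
    have := hae
    rw [Filter.EventuallyEq, ae_iff] at this
    simpa using this
  have hle : volume.restrict s U ≤ volume.restrict s {y | f y ≠ 0} := measure_mono hsub
  rw [this] at hle
  have : volume.restrict s U = volume U := by
    rw [Measure.restrict_apply hUopen.measurableSet]
    congr 1
    exact Set.inter_eq_left.mpr fun y hy => hy.1
  rw [this] at hle
  exact absurd (le_antisymm hle zero_le) (ne_of_gt hUpos)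

lemma mem_closure_box (y : EuclideanSpace ℝ (Fin d)) (hy : ∀ i, y i ∈ Set.Icc (0:ℝ) 1) :
    y ∈ closure {y : EuclideanSpace ℝ (Fin d) | ∀ i, y i ∈ Set.Ioo (0:ℝ) 1} := by
  have key : ∀ t : ℝ, t ∈ Set.Ioo (0:ℝ) 1 →
      (y + t • (((EuclideanSpace.equiv (Fin d) ℝ).symm fun _ => 1/2) - y))
        ∈ {y : EuclideanSpace ℝ (Fin d) | ∀ i, y i ∈ Set.Ioo (0:ℝ) 1} := by
    intro t ht i
    have h1 := (hy i).1; have h2 := (hy i).2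
    have : (y + t • (((EuclideanSpace.equiv (Fin d) ℝ).symm fun _ => 1/2) - y)) i
        = y i + t * (1/2 - y i) := by
      simp [PiLp.add_apply, PiLp.smul_apply, PiLp.sub_apply]
    rw [this]
    constructor <;> nlinarith [ht.1, ht.2]
  have htend : Filter.Tendsto
      (fun k : ℕ => y + (1/(k+2) : ℝ) • (((EuclideanSpace.equiv (Fin d) ℝ).symm fun _ => 1/2) - y))
      Filter.atTop (nhds y) := by
    have h0 : Filter.Tendsto (fun k : ℕ => (1/(k+2) : ℝ)) Filter.atTop (nhds 0) := by
      simp only [one_div]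
      apply Filter.Tendsto.comp tendsto_inv_atTop_zero
      exact Filter.tendsto_atTop_add_const_right _ 2 tendsto_natCast_atTop_atTop
    have := (h0.smul_const (((EuclideanSpace.equiv (Fin d) ℝ).symm fun _ => 1/2) - y))
    rw [zero_smul] at this
    simpa using (tendsto_const_nhds.add this)
  refine mem_closure_of_tendsto htend (Filter.Eventually.of_forall fun k => ?_)
  apply key
  constructor
  · positivity
  · rw [div_lt_one (by positivity)]
    have : (0:ℝ) ≤ k := Nat.cast_nonneg k
    linarith

/-- `e·∇u(x)e` equals the quadratic form of the symmetrized gradient. -/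
lemma quad_eq (u : EuclideanSpace ℝ (Fin d) → EuclideanSpace ℝ (Fin d))
    (x e : EuclideanSpace ℝ (Fin d)) :
    ∑ m, e m * fderiv ℝ u x e m = ∑ m, ∑ n, e m * e n * symGrad u x m n := by
  have hexp : fderiv ℝ u x e = ∑ n, e n • fderiv ℝ u x (EuclideanSpace.single n 1) := by
    conv_lhs => rw [← basis_expand e]
    rw [map_sum]
    exact Finset.sum_congr rfl fun n _ => by rw [_root_.map_smul]
  have hL : ∑ m, e m * fderiv ℝ u x e m
      = ∑ m, ∑ n, e m * e n * fderiv ℝ u x (EuclideanSpace.single n 1) m := by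
    refine Finset.sum_congr rfl fun m _ => ?_
    rw [hexp, euclid_sum_apply, Finset.mul_sum]
    exact Finset.sum_congr rfl fun n _ => by
      simp [PiLp.smul_apply, smul_eq_mul]; ring
  rw [hL]
  have hswap : ∑ m, ∑ n, e m * e n * fderiv ℝ u x (EuclideanSpace.single m 1) n
      = ∑ m, ∑ n, e m * e n * fderiv ℝ u x (EuclideanSpace.single n 1) m := by
    rw [Finset.sum_comm]
    exact Finset.sum_congr rfl fun m _ => Finset.sum_congr rfl fun n _ => by ring
  symm
  calc ∑ m, ∑ n, e m * e n * symGrad u x m n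
      = ∑ m, ∑ n, (e m * e n * fderiv ℝ u x (EuclideanSpace.single m 1) n
          + e m * e n * fderiv ℝ u x (EuclideanSpace.single n 1) m)/2 := by
        refine Finset.sum_congr rfl fun m _ => Finset.sum_congr rfl fun n _ => ?_
        simp only [symGrad]; ring
    _ = ((∑ m, ∑ n, e m * e n * fderiv ℝ u x (EuclideanSpace.single m 1) n)
          + ∑ m, ∑ n, e m * e n * fderiv ℝ u x (EuclideanSpace.single n 1) m)/2 := by
        simp only [Finset.sum_add_distrib, ← Finset.sum_div]
    _ = ∑ m, ∑ n, e m * e n * fderiv ℝ u x (EuclideanSpace.single n 1) m := by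
        rw [hswap]; ring

/-- Periodicity in direction `e` forces the constant quadratic form to vanish. -/
lemma ftc_periodic (u : EuclideanSpace ℝ (Fin d) → EuclideanSpace ℝ (Fin d))
    (hu : ContDiff ℝ 1 u) (e : EuclideanSpace ℝ (Fin d)) (hper : u e = u 0) (c : ℝ)
    (hc : ∀ t ∈ Set.Icc (0:ℝ) 1, ∑ m, e m * fderiv ℝ u (t • e) e m = c) : c = 0 := by
  set g : ℝ → ℝ := fun t => ∑ m, e m * u (t • e) m with hg
  set g' : ℝ → ℝ := fun t => ∑ m, e m * fderiv ℝ u (t • e) e m with hg'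
  have hderiv : ∀ t : ℝ, HasDerivAt g (g' t) t := by
    intro t
    have hpath : HasDerivAt (fun s : ℝ => s • e) e t := by
      simpa using (hasDerivAt_id t).smul_const e
    have hcomp : HasDerivAt (fun s : ℝ => u (s • e)) (fderiv ℝ u (t • e) e) t :=
      HasFDerivAt.comp_hasDerivAt t
        ((hu.differentiable one_ne_zero).differentiableAt.hasFDerivAt) hpath
    apply HasDerivAt.fun_sum
    intro m _
    have hm := HasFDerivAt.comp_hasDerivAt t
      ((EuclideanSpace.proj m (𝕜 := ℝ)).hasFDerivAt) hcomp
    exact hm.const_mul (e m)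
  have hcont : Continuous g' := by
    apply continuous_finset_sum
    intro m _
    exact continuous_const.mul ((EuclideanSpace.proj m).continuous.comp
      (((hu.continuous_fderiv one_ne_zero).comp (continuous_id.smul continuous_const)).clm_apply
        continuous_const))
  have hint : IntervalIntegrable g' volume 0 1 := hcont.intervalIntegrable 0 1
  have h1 : ∫ t in (0:ℝ)..1, g' t = g 1 - g 0 :=
    intervalIntegral.integral_eq_sub_of_hasDerivAt (fun t _ => hderiv t) hint
  have h2 : g 1 = g 0 := by
    simp only [hg, one_smul, zero_smul]
    rw [hper]
  have h3 : ∫ t in (0:ℝ)..1, g' t = c := by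
    rw [intervalIntegral.integral_congr (g := fun _ => c)
      (fun t ht => hc t (by rwa [Set.uIcc_of_le zero_le_one] at ht))]
    simp
  rw [h3, h2] at h1
  linarith

/-- Expansion of a double sum of products of linear combinations. -/
lemma sum_expand {ι κ : Type*} [Fintype ι] [Fintype κ] (a b : κ → ℝ) (U V : κ → ι → ℝ) :
    ∑ r : ι, (∑ p, a p * U p r) * (∑ q, b q * V q r)
      = ∑ p, ∑ q, (a p * b q) * ∑ r, U p r * V q r := by
  have h1 : ∀ r : ι, (∑ p, a p * U p r) * (∑ q, b q * V q r)
      = ∑ p, ∑ q, (a p * U p r) * (b q * V q r) := fun r => Finset.sum_mul_sum _ _ _ _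
  rw [Finset.sum_congr rfl fun r _ => h1 r]
  rw [Finset.sum_comm]
  refine Finset.sum_congr rfl fun p _ => ?_
  rw [Finset.sum_comm]
  refine Finset.sum_congr rfl fun q _ => ?_
  rw [Finset.mul_sum]
  exact Finset.sum_congr rfl fun r _ => by ring

variable {d : ℕ}

/-- Sum of coefficients against the constant symmetrized gradients of the `Pfield`s. -/
lemma sumQ (ζ η : EuclideanSpace ℝ (Fin d)) (y : EuclideanSpace ℝ (Fin d)) (m n : Fin d) :
    ∑ p : Fin d × Fin d, ζ p.1 * η p.2 * symGrad (Pfield p.1 p.2) y m n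
      = (ζ m * η n + ζ n * η m) / 2 := by
  rw [Fintype.sum_prod_type]
  simp only [symGrad_Pfield]
  have h : ∀ i : Fin d, ∑ j : Fin d, ζ i * η j *
      (((if m = i then (if n = j then (1:ℝ) else 0) else 0)
        + (if n = i then (if m = j then (1:ℝ) else 0) else 0)) / 2)
      = (if m = i then ζ i * η n / 2 else 0) + (if n = i then ζ i * η m / 2 else 0) := by
    intro i
    have hterm : ∀ j, ζ i * η j *
        (((if m = i then (if n = j then (1:ℝ) else 0) else 0)
          + (if n = i then (if m = j then (1:ℝ) else 0) else 0)) / 2)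
        = (if m = i then (if n = j then ζ i * η j / 2 else 0) else 0)
          + (if n = i then (if m = j then ζ i * η j / 2 else 0) else 0) := by
      intro j; split_ifs <;> ring
    rw [Finset.sum_congr rfl fun j _ => hterm j, Finset.sum_add_distrib]
    congr 1
    · by_cases h1 : m = i <;> simp [h1, Finset.sum_ite_eq]
    · by_cases h2 : n = i <;> simp [h2, Finset.sum_ite_eq]
  rw [Finset.sum_congr rfl fun i _ => h i]
  simp [Finset.sum_add_distrib, Finset.sum_ite_eq]
  ring

/-- norm-one vectors have unit sum of squares of coordinates -/
lemma sum_sq_coords (ζ : EuclideanSpace ℝ (Fin d)) (hζ : ‖ζ‖ = 1) : ∑ i, ζ i ^ 2 = 1 := by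
  have h := EuclideanSpace.norm_eq ζ
  rw [hζ] at h
  have h2 : ∑ i, ‖ζ i‖ ^ 2 = 1 := by
    have := Real.sqrt_eq_one.mp h.symm
    exact this
  simpa [Real.norm_eq_abs, sq_abs] using h2

lemma S_contradiction (ζ η : EuclideanSpace ℝ (Fin d)) (hζ : ‖ζ‖ = 1) (hη : ‖η‖ = 1)
    (hS : ∀ m n : Fin d, (ζ m * η n + ζ n * η m) / 2 = 0) : False := by
  have key : ∑ m, ∑ n, ((ζ m * η n + ζ n * η m) / 2) * (ζ m * η n)
      = ((∑ m, ζ m ^ 2) * (∑ n, η n ^ 2) + (∑ m, ζ m * η m) ^ 2) / 2 := by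
    have e1 : (∑ m, ζ m ^ 2) * (∑ n, η n ^ 2) = ∑ m, ∑ n, ζ m ^ 2 * η n ^ 2 :=
      Finset.sum_mul_sum _ _ _ _
    have e2 : (∑ m, ζ m * η m) ^ 2 = ∑ m, ∑ n, (ζ m * η m) * (ζ n * η n) := by
      rw [sq]; exact Finset.sum_mul_sum _ _ _ _
    rw [e1, e2]
    rw [← Finset.sum_add_distrib, Finset.sum_div]
    refine Finset.sum_congr rfl fun m _ => ?_
    rw [← Finset.sum_add_distrib, Finset.sum_div]
    exact Finset.sum_congr rfl fun n _ => by ring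
  have hz : ∑ m, ∑ n, ((ζ m * η n + ζ n * η m) / 2) * (ζ m * η n) = 0 := by
    refine Finset.sum_eq_zero fun m _ => Finset.sum_eq_zero fun n _ => ?_
    rw [hS m n, zero_mul]
  rw [hz, sum_sq_coords ζ hζ, sum_sq_coords η hη] at key
  nlinarith [sq_nonneg (∑ m, ζ m * η m)]

lemma Fq_pos {d : ℕ}
    (χ : Fin d → Fin d → EuclideanSpace ℝ (Fin d) → EuclideanSpace ℝ (Fin d))
    (hχC1 : ∀ i j, ContDiff ℝ 1 (χ i j))
    (hχper : ∀ (i j : Fin d) (y : EuclideanSpace ℝ (Fin d)) (l : Fin d),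
      χ i j (y + EuclideanSpace.single l 1) = χ i j y)
    (hcell : ∀ i j m n : Fin d,
      ∫ y in {y : EuclideanSpace ℝ (Fin d) | ∀ i, y i ∈ Set.Ioo (0:ℝ) 1},
        frob (symGrad (fun z => Pfield i j z - χ i j z) y) (symGrad (χ m n) y) = 0)
    (N : Fin d → Fin d → Fin d → Fin d → ℝ)
    (hN : ∀ i j m n : Fin d,
      N i j m n = ∫ y in {y : EuclideanSpace ℝ (Fin d) | ∀ i, y i ∈ Set.Ioo (0:ℝ) 1},
        symGrad (fun z => Pfield i j z - χ i j z) y m n)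
    (ζ η : EuclideanSpace ℝ (Fin d)) (hζ : ‖ζ‖ = 1) (hη : ‖η‖ = 1) :
    0 < ∑ i, ∑ j, ∑ m, ∑ n, N i j m n * ζ i * ζ m * η j * η n := by
  classical
  set YB := {y : EuclideanSpace ℝ (Fin d) | ∀ i, y i ∈ Set.Ioo (0:ℝ) 1} with hYB
  set G : Fin d × Fin d → EuclideanSpace ℝ (Fin d) → Matrix (Fin d) (Fin d) ℝ :=
    fun p => symGrad (fun z => Pfield p.1 p.2 z - χ p.1 p.2 z) with hG
  set H : Fin d × Fin d → EuclideanSpace ℝ (Fin d) → Matrix (Fin d) (Fin d) ℝ :=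
    fun p => symGrad (χ p.1 p.2) with hH
  set M : EuclideanSpace ℝ (Fin d) → Fin d → Fin d → ℝ :=
    fun y m n => ∑ p : Fin d × Fin d, (ζ p.1 * η p.2) * G p y m n with hM
  have hχdiff : ∀ p : Fin d × Fin d, ContDiff ℝ 1 (χ p.1 p.2) := fun p => hχC1 p.1 p.2
  have hGC : ∀ (p : Fin d × Fin d) (m n : Fin d), Continuous fun y => G p y m n := fun p m n =>
    continuous_symGrad_entry _ (contDiff_Pfield_sub p.1 p.2 _ (hχdiff p)) m n
  have hHC : ∀ (p : Fin d × Fin d) (m n : Fin d), Continuous fun y => H p y m n := fun p m n =>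
    continuous_symGrad_entry _ (hχdiff p) m n
  have hMC : ∀ m n : Fin d, Continuous fun y => M y m n := fun m n =>
    continuous_finset_sum _ fun p _ => continuous_const.mul (hGC p m n)
  have hMsym : ∀ y (m n : Fin d), M y m n = M y n m := fun y m n =>
    Finset.sum_congr rfl fun p _ => by simp only [hG]; rw [symGrad_symm]
  have hInt : ∀ {f : EuclideanSpace ℝ (Fin d) → ℝ}, Continuous f → IntegrableOn f YB volume := by
    intro f hf; rw [hYB]; exact integrableOn_box hf
  have hSdecomp : ∀ y (m n : Fin d), M y m n
      = (ζ m * η n + ζ n * η m)/2 - ∑ p : Fin d × Fin d, (ζ p.1 * η p.2) * H p y m n := by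
    intro y m n
    have h1 : ∀ p : Fin d × Fin d, G p y m n = symGrad (Pfield p.1 p.2) y m n - H p y m n :=
      fun p => by simp only [hG, hH]; exact symGrad_sub_apply p.1 p.2 _ (hχdiff p) y m n
    calc M y m n = ∑ p : Fin d × Fin d, ((ζ p.1 * η p.2) * symGrad (Pfield p.1 p.2) y m n
          - (ζ p.1 * η p.2) * H p y m n) := by
          simp only [hM]; exact Finset.sum_congr rfl fun p _ => by rw [h1 p]; ring
      _ = (∑ p : Fin d × Fin d, (ζ p.1 * η p.2) * symGrad (Pfield p.1 p.2) y m n)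
          - ∑ p : Fin d × Fin d, (ζ p.1 * η p.2) * H p y m n := Finset.sum_sub_distrib _ _
      _ = _ := by rw [sumQ]
  -- Step 1: rewrite the quadruple sum over product indices
  have hF1 : ∑ i, ∑ j, ∑ m, ∑ n, N i j m n * ζ i * ζ m * η j * η n
      = ∑ p : Fin d × Fin d, ∑ r : Fin d × Fin d,
          (ζ p.1 * η p.2) * (ζ r.1 * η r.2) * N p.1 p.2 r.1 r.2 := by
    simp only [Fintype.sum_prod_type]
    exact Finset.sum_congr rfl fun i _ => Finset.sum_congr rfl fun j _ =>
      Finset.sum_congr rfl fun m _ => Finset.sum_congr rfl fun n _ => by ring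
  -- Step 2: as a single integral
  have hF2 : ∑ i, ∑ j, ∑ m, ∑ n, N i j m n * ζ i * ζ m * η j * η n
      = ∫ y in YB, ∑ r : Fin d × Fin d, M y r.1 r.2 * (ζ r.1 * η r.2) := by
    rw [hF1]
    have h1 : ∀ p r : Fin d × Fin d, (ζ p.1 * η p.2) * (ζ r.1 * η r.2) * N p.1 p.2 r.1 r.2
        = ∫ y in YB, (ζ p.1 * η p.2) * (ζ r.1 * η r.2) * G p y r.1 r.2 := by
      intro p r
      simp only [hG]
      rw [hN p.1 p.2 r.1 r.2, ← MeasureTheory.integral_const_mul]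
    have hpt : ∀ y, ∑ p : Fin d × Fin d, ∑ r : Fin d × Fin d,
        (ζ p.1 * η p.2) * (ζ r.1 * η r.2) * G p y r.1 r.2
        = ∑ r : Fin d × Fin d, M y r.1 r.2 * (ζ r.1 * η r.2) := by
      intro y
      rw [Finset.sum_comm]
      refine Finset.sum_congr rfl fun r _ => ?_
      simp only [hM]
      rw [Finset.sum_mul]
      exact Finset.sum_congr rfl fun p _ => by ring
    calc ∑ p : Fin d × Fin d, ∑ r : Fin d × Fin d,
          (ζ p.1 * η p.2) * (ζ r.1 * η r.2) * N p.1 p.2 r.1 r.2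
        = ∑ p : Fin d × Fin d, ∑ r : Fin d × Fin d,
            ∫ y in YB, (ζ p.1 * η p.2) * (ζ r.1 * η r.2) * G p y r.1 r.2 :=
          Finset.sum_congr rfl fun p _ => Finset.sum_congr rfl fun r _ => h1 p r
      _ = ∑ p : Fin d × Fin d, ∫ y in YB, ∑ r : Fin d × Fin d,
            (ζ p.1 * η p.2) * (ζ r.1 * η r.2) * G p y r.1 r.2 :=
          Finset.sum_congr rfl fun p _ =>
            (integral_finset_sum _ fun r _ => hInt (continuous_const.mul (hGC p r.1 r.2))).symm
      _ = ∫ y in YB, ∑ p : Fin d × Fin d, ∑ r : Fin d × Fin d,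
            (ζ p.1 * η p.2) * (ζ r.1 * η r.2) * G p y r.1 r.2 :=
          (integral_finset_sum _ fun p _ => hInt (continuous_finset_sum _ fun r _ =>
            continuous_const.mul (hGC p r.1 r.2))).symm
      _ = ∫ y in YB, ∑ r : Fin d × Fin d, M y r.1 r.2 * (ζ r.1 * η r.2) := by simp only [hpt]
  -- Step 3: pointwise split into square part and cross part
  have hsplit : ∀ y, ∑ r : Fin d × Fin d, M y r.1 r.2 * (ζ r.1 * η r.2)
      = (∑ r : Fin d × Fin d, (M y r.1 r.2)^2)
        + ∑ r : Fin d × Fin d, M y r.1 r.2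
            * (∑ p : Fin d × Fin d, (ζ p.1 * η p.2) * H p y r.1 r.2) := by
    intro y
    have hswap : ∑ r : Fin d × Fin d, M y r.1 r.2 * (ζ r.2 * η r.1)
        = ∑ r : Fin d × Fin d, M y r.1 r.2 * (ζ r.1 * η r.2) := by
      have he := Equiv.sum_comp (Equiv.prodComm (Fin d) (Fin d))
        (fun r : Fin d × Fin d => M y r.1 r.2 * (ζ r.1 * η r.2))
      rw [← he]
      refine Finset.sum_congr rfl fun r _ => ?_
      simp only [Equiv.prodComm_apply, Prod.fst_swap, Prod.snd_swap]
      rw [hMsym y r.2 r.1]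
    have hexp : ∑ r : Fin d × Fin d, M y r.1 r.2 * ((ζ r.1 * η r.2 + ζ r.2 * η r.1)/2)
        = ((∑ r : Fin d × Fin d, M y r.1 r.2 * (ζ r.1 * η r.2))
          + ∑ r : Fin d × Fin d, M y r.1 r.2 * (ζ r.2 * η r.1))/2 := by
      rw [← Finset.sum_add_distrib, Finset.sum_div]
      exact Finset.sum_congr rfl fun r _ => by ring
    have hhalf : ∑ r : Fin d × Fin d, M y r.1 r.2 * (ζ r.1 * η r.2)
        = ∑ r : Fin d × Fin d, M y r.1 r.2 * ((ζ r.1 * η r.2 + ζ r.2 * η r.1)/2) := by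
      rw [hexp, hswap]; ring
    rw [hhalf, ← Finset.sum_add_distrib]
    refine Finset.sum_congr rfl fun r _ => ?_
    have h1 := hSdecomp y r.1 r.2
    have hS' : (ζ r.1 * η r.2 + ζ r.2 * η r.1)/2
        = M y r.1 r.2 + ∑ p : Fin d × Fin d, (ζ p.1 * η p.2) * H p y r.1 r.2 := by linarith
    rw [hS']; ring
  -- Step 4: the cross part integrates to zero
  have hcross : ∫ y in YB, ∑ r : Fin d × Fin d, M y r.1 r.2
      * (∑ p : Fin d × Fin d, (ζ p.1 * η p.2) * H p y r.1 r.2) = 0 := by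
    have hpt : ∀ y, ∑ r : Fin d × Fin d, M y r.1 r.2
        * (∑ p : Fin d × Fin d, (ζ p.1 * η p.2) * H p y r.1 r.2)
        = ∑ p : Fin d × Fin d, ∑ q : Fin d × Fin d,
            ((ζ p.1 * η p.2) * (ζ q.1 * η q.2))
              * ∑ r : Fin d × Fin d, G p y r.1 r.2 * H q y r.1 r.2 := by
      intro y
      simp only [hM]
      exact sum_expand _ _ _ _
    simp only [hpt]
    have hfrob : ∀ (p q : Fin d × Fin d) y, ∑ r : Fin d × Fin d, G p y r.1 r.2 * H q y r.1 r.2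
        = frob (G p y) (H q y) := by
      intro p q y
      rw [frob, Fintype.sum_prod_type]
    have hintrow : ∀ p q : Fin d × Fin d, IntegrableOn
        (fun y => ((ζ p.1 * η p.2) * (ζ q.1 * η q.2))
          * ∑ r : Fin d × Fin d, G p y r.1 r.2 * H q y r.1 r.2) YB volume :=
      fun p q => hInt (continuous_const.mul (continuous_finset_sum _ fun r _ =>
        (hGC p r.1 r.2).mul (hHC q r.1 r.2)))
    rw [integral_finset_sum _ (fun p _ => hInt (f := fun y => ∑ q : Fin d × Fin d,
      ((ζ p.1 * η p.2) * (ζ q.1 * η q.2)) * ∑ r : Fin d × Fin d, G p y r.1 r.2 * H q y r.1 r.2)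
      (continuous_finset_sum _ fun q _ =>
      continuous_const.mul (continuous_finset_sum _ fun r _ =>
        (hGC p r.1 r.2).mul (hHC q r.1 r.2))))]
    refine Finset.sum_eq_zero fun p _ => ?_
    rw [integral_finset_sum _ (fun q _ => hintrow p q)]
    refine Finset.sum_eq_zero fun q _ => ?_
    rw [MeasureTheory.integral_const_mul]
    have h0 : ∫ y in YB, ∑ r : Fin d × Fin d, G p y r.1 r.2 * H q y r.1 r.2 = 0 := by
      have := hcell p.1 p.2 q.1 q.2
      simp only [hfrob]
      simp only [hG, hH]
      exact this
    rw [h0, mul_zero]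
  -- Step 5: final integral formula
  have hF3 : ∑ i, ∑ j, ∑ m, ∑ n, N i j m n * ζ i * ζ m * η j * η n
      = ∫ y in YB, ∑ r : Fin d × Fin d, (M y r.1 r.2)^2 := by
    rw [hF2]
    simp only [hsplit]
    rw [MeasureTheory.integral_add
      (hInt (continuous_finset_sum _ fun r _ => (hMC r.1 r.2).pow 2))
      (hInt (continuous_finset_sum _ fun r _ => (hMC r.1 r.2).mul
        (continuous_finset_sum _ fun p _ => continuous_const.mul (hHC p r.1 r.2))))]
    rw [hcross, add_zero]
  have hnn : 0 ≤ ∫ y in YB, ∑ r : Fin d × Fin d, (M y r.1 r.2)^2 := by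
    refine MeasureTheory.setIntegral_nonneg ?_ fun y _ => Finset.sum_nonneg fun r _ => sq_nonneg _
    rw [hYB]; exact box_open.measurableSet
  rw [hF3]
  rcases lt_or_eq_of_le hnn with h | heq
  · exact h
  · -- the degenerate case leads to a contradiction
    exfalso
    have h0 : ∫ y in YB, ∑ r : Fin d × Fin d, (M y r.1 r.2)^2 = 0 := heq.symm
    have hzero : ∀ y ∈ YB, ∑ r : Fin d × Fin d, (M y r.1 r.2)^2 = 0 := by
      have := zero_on_open (s := YB) (by rw [hYB]; exact box_open)
        (continuous_finset_sum _ fun r _ => (hMC r.1 r.2).pow 2)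
        (fun x => Finset.sum_nonneg fun r _ => sq_nonneg _)
        (hInt (continuous_finset_sum _ fun r _ => (hMC r.1 r.2).pow 2)) h0
      exact this
    have hMzero : ∀ y ∈ YB, ∀ m n : Fin d, M y m n = 0 := by
      intro y hy m n
      have := (Finset.sum_eq_zero_iff_of_nonneg
        (fun r _ => sq_nonneg (M y r.1 r.2))).mp (hzero y hy) (m, n) (Finset.mem_univ _)
      exact pow_eq_zero_iff two_ne_zero |>.mp this
    set u : EuclideanSpace ℝ (Fin d) → EuclideanSpace ℝ (Fin d) :=
      fun z => ∑ p : Fin d × Fin d, (ζ p.1 * η p.2) • χ p.1 p.2 z with hu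
    have huC1 : ContDiff ℝ 1 u :=
      ContDiff.sum fun p _ => (hχdiff p).const_smul (ζ p.1 * η p.2)
    have hsymu : ∀ y (m n : Fin d), symGrad u y m n
        = ∑ p : Fin d × Fin d, (ζ p.1 * η p.2) * H p y m n := by
      intro y m n
      simp only [hu, hH]
      exact symGrad_sum_smul _ _ (fun p => hχdiff p) y m n
    have hSY : ∀ m n : Fin d, Set.EqOn (fun y => symGrad u y m n)
        (fun _ => (ζ m * η n + ζ n * η m)/2) YB := by
      intro m n y hy
      have h1 := hSdecomp y m n
      have h2 := hMzero y hy m n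
      have h3 := hsymu y m n
      simp only
      rw [h3]; linarith
    have hScl : ∀ (m n : Fin d) (y : EuclideanSpace ℝ (Fin d)), y ∈ closure YB →
        symGrad u y m n = (ζ m * η n + ζ n * η m)/2 := fun m n y hy =>
      (hSY m n).closure (continuous_symGrad_entry u huC1 m n) continuous_const hy
    have hperu : ∀ (y : EuclideanSpace ℝ (Fin d)) (l : Fin d),
        u (y + EuclideanSpace.single l 1) = u y := by
      intro y l
      simp only [hu]
      exact Finset.sum_congr rfl fun p _ => by rw [hχper p.1 p.2 y l]
    have hmem : ∀ (e : EuclideanSpace ℝ (Fin d)), (∀ i, e i ∈ Set.Icc (0:ℝ) 1) →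
        ∀ t ∈ Set.Icc (0:ℝ) 1, (t • e) ∈ closure YB := by
      intro e he t ht
      rw [hYB]
      apply mem_closure_box
      intro i
      have h1 : (t • e) i = t * e i := rfl
      rw [h1]
      have h2 := he i
      constructor
      · exact mul_nonneg ht.1 h2.1
      · nlinarith [ht.1, ht.2, h2.1, h2.2]
    have hquadzero : ∀ (e : EuclideanSpace ℝ (Fin d)), (∀ i, e i ∈ Set.Icc (0:ℝ) 1) →
        u e = u 0 → ∑ m, ∑ n, e m * e n * ((ζ m * η n + ζ n * η m)/2) = 0 := by
      intro e he hpere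
      refine ftc_periodic u huC1 e hpere _ (fun t ht => ?_)
      rw [quad_eq u (t • e) e]
      exact Finset.sum_congr rfl fun m _ => Finset.sum_congr rfl fun n _ => by
        rw [hScl m n _ (hmem e he t ht)]
    have hdiag : ∀ a : Fin d, (ζ a * η a + ζ a * η a)/2 = 0 := by
      intro a
      have he : ∀ i, (EuclideanSpace.single a (1:ℝ)) i ∈ Set.Icc (0:ℝ) 1 := by
        intro i
        rw [EuclideanSpace.single_apply]
        split_ifs <;> constructor <;> norm_num
      have hpere : u (EuclideanSpace.single a 1) = u 0 := by
        have := hperu 0 a; rwa [zero_add] at this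
      have h := hquadzero _ he hpere
      simpa [EuclideanSpace.single_apply, mul_ite, mul_zero, mul_one, ite_mul, zero_mul, one_mul,
        Finset.sum_ite_eq, Finset.sum_ite_eq'] using h
    have hoff : ∀ a b : Fin d, (ζ a * η b + ζ b * η a)/2 = 0 := by
      intro a b
      by_cases hab : a = b
      · subst hab; exact hdiag a
      · have he : ∀ i, ((EuclideanSpace.single a (1:ℝ) + EuclideanSpace.single b 1 : EuclideanSpace ℝ (Fin d)) i)
            ∈ Set.Icc (0:ℝ) 1 := by
          intro i
          have h1 : ((EuclideanSpace.single a (1:ℝ) + EuclideanSpace.single b 1 : EuclideanSpace ℝ (Fin d)) i)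
              = (if i = a then (1:ℝ) else 0) + (if i = b then (1:ℝ) else 0) := by
            simp [EuclideanSpace.single_apply]
          rw [h1]
          split_ifs with hia hib hib
          · exact absurd (hia ▸ hib ▸ rfl : a = b) hab
          · constructor <;> norm_num
          · constructor <;> norm_num
          · constructor <;> norm_num
        have hpere : u (EuclideanSpace.single a 1 + EuclideanSpace.single b 1) = u 0 := by
          have h1 : u (EuclideanSpace.single a (1:ℝ) + EuclideanSpace.single b 1)
              = u (EuclideanSpace.single a 1) := hperu (EuclideanSpace.single a 1) b
          rw [h1]
          have := hperu 0 a; rwa [zero_add] at this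
        have h := hquadzero _ he hpere
        have hsum : ∑ m, ∑ n, ((EuclideanSpace.single a (1:ℝ) + EuclideanSpace.single b 1 : EuclideanSpace ℝ (Fin d)) m)
            * ((EuclideanSpace.single a (1:ℝ) + EuclideanSpace.single b 1 : EuclideanSpace ℝ (Fin d)) n)
            * ((ζ m * η n + ζ n * η m)/2)
            = (ζ a * η a + ζ a * η a)/2 + (ζ a * η b + ζ b * η a)/2
              + ((ζ b * η a + ζ a * η b)/2 + (ζ b * η b + ζ b * η b)/2) := by
          have hco : ∀ m : Fin d, ((EuclideanSpace.single a (1:ℝ) + EuclideanSpace.single b 1 : EuclideanSpace ℝ (Fin d)) m)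
              = (if m = a then (1:ℝ) else 0) + (if m = b then (1:ℝ) else 0) := by
            intro m; simp [EuclideanSpace.single_apply]
          simp only [hco]
          simp [add_mul, mul_add, Finset.sum_add_distrib, ite_mul, zero_mul, one_mul,
            mul_ite, mul_zero, Finset.sum_ite_eq, Finset.sum_ite_eq']
          ring
        rw [hsum] at h
        have hda := hdiag a
        have hdb := hdiag b
        linarith
    exact S_contradiction ζ η hζ hη hoff

lemma Fq_continuous {d : ℕ} (N : Fin d → Fin d → Fin d → Fin d → ℝ) :
    Continuous fun p : EuclideanSpace ℝ (Fin d) × EuclideanSpace ℝ (Fin d) =>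
      ∑ i, ∑ j, ∑ m, ∑ n, N i j m n * p.1 i * p.1 m * p.2 j * p.2 n := by
  have h1 : ∀ i : Fin d, Continuous fun p : EuclideanSpace ℝ (Fin d) × EuclideanSpace ℝ (Fin d) =>
      p.1 i := fun i => (EuclideanSpace.proj i).continuous.comp continuous_fst
  have h2 : ∀ j : Fin d, Continuous fun p : EuclideanSpace ℝ (Fin d) × EuclideanSpace ℝ (Fin d) =>
      p.2 j := fun j => (EuclideanSpace.proj j).continuous.comp continuous_snd
  refine continuous_finset_sum _ fun i _ => continuous_finset_sum _ fun j _ =>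
    continuous_finset_sum _ fun m _ => continuous_finset_sum _ fun n _ => ?_
  exact (((continuous_const.mul (h1 i)).mul (h1 m)).mul (h2 j)).mul (h2 n)

lemma Fq_homog {d : ℕ} (N : Fin d → Fin d → Fin d → Fin d → ℝ)
    (a b : ℝ) (ζ η : EuclideanSpace ℝ (Fin d)) :
    ∑ i, ∑ j, ∑ m, ∑ n, N i j m n * (a • ζ) i * (a • ζ) m * (b • η) j * (b • η) n
      = a^2 * b^2 * ∑ i, ∑ j, ∑ m, ∑ n, N i j m n * ζ i * ζ m * η j * η n := by
  simp only [PiLp.smul_apply, smul_eq_mul, Finset.mul_sum]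
  exact Finset.sum_congr rfl fun i _ => Finset.sum_congr rfl fun j _ =>
    Finset.sum_congr rfl fun m _ => Finset.sum_congr rfl fun n _ => by ring

set_option maxHeartbeats 1000000 in
/-- Under the cell-problem orthogonality hypotheses, the effective viscosity
tensor satisfies the Legendre–Hadamard (strong ellipticity) condition: there exists `λ > 0`
with `Σ N^{ij}_{mn} ζ_i ζ_m η_j η_n ≥ λ |ζ|² |η|²` for all `ζ, η ∈ ℝ^d`. -/
theorem effective_viscosity_legendre_hadamard
    (d : ℕ) (hd : d = 2 ∨ d = 3)
    (Y : Set (EuclideanSpace ℝ (Fin d)))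
    (hY : Y = {y : EuclideanSpace ℝ (Fin d) | ∀ i, y i ∈ Set.Ioo (0 : ℝ) 1})
    (χ : Fin d → Fin d → EuclideanSpace ℝ (Fin d) → EuclideanSpace ℝ (Fin d))
    (hχC1 : ∀ i j, ContDiff ℝ 1 (χ i j))
    (hχper : ∀ (i j : Fin d) (y : EuclideanSpace ℝ (Fin d)) (l : Fin d),
      χ i j (y + EuclideanSpace.single l 1) = χ i j y)
    (hcell : ∀ i j m n : Fin d,
      ∫ y in Y, frob (symGrad (fun z => Pfield i j z - χ i j z) y) (symGrad (χ m n) y) = 0)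
    (N : Fin d → Fin d → Fin d → Fin d → ℝ)
    (hN : ∀ i j m n : Fin d,
      N i j m n = ∫ y in Y, symGrad (fun z => Pfield i j z - χ i j z) y m n) :
    ∃ lam : ℝ, 0 < lam ∧ ∀ ζ η : EuclideanSpace ℝ (Fin d),
      lam * ‖ζ‖ ^ 2 * ‖η‖ ^ 2 ≤ ∑ i, ∑ j, ∑ m, ∑ n, N i j m n * ζ i * ζ m * η j * η n := by
  subst hY
  have hdpos : 0 < d := by omega
  haveI : Nonempty (Fin d) := ⟨⟨0, hdpos⟩⟩
  haveI : Nontrivial (EuclideanSpace ℝ (Fin d)) := by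
    refine ⟨EuclideanSpace.single ⟨0, hdpos⟩ 1, 0, fun h => ?_⟩
    have := congrFun (congrArg (fun v : EuclideanSpace ℝ (Fin d) => (v : Fin d → ℝ)) h) ⟨0, hdpos⟩
    simp [EuclideanSpace.single_apply] at this
  have hpos : ∀ ζ η : EuclideanSpace ℝ (Fin d), ‖ζ‖ = 1 → ‖η‖ = 1 →
      0 < ∑ i, ∑ j, ∑ m, ∑ n, N i j m n * ζ i * ζ m * η j * η n :=
    fun ζ η hζ hη => Fq_pos χ hχC1 hχper hcell N hN ζ η hζ hη
  -- compactness: minimum over the product of unit spheres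
  set K : Set (EuclideanSpace ℝ (Fin d) × EuclideanSpace ℝ (Fin d)) :=
    Metric.sphere 0 1 ×ˢ Metric.sphere 0 1 with hK
  have hKc : IsCompact K := (isCompact_sphere 0 1).prod (isCompact_sphere 0 1)
  have hKne : K.Nonempty :=
    (NormedSpace.sphere_nonempty.mpr zero_le_one).prod (NormedSpace.sphere_nonempty.mpr zero_le_one)
  obtain ⟨p0, hp0K, hmin⟩ := hKc.exists_isMinOn hKne (Fq_continuous N).continuousOn
  have hp0s : ‖p0.1‖ = 1 ∧ ‖p0.2‖ = 1 := by
    rw [hK] at hp0K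
    obtain ⟨h1, h2⟩ := hp0K
    exact ⟨by simpa using h1, by simpa using h2⟩
  refine ⟨∑ i, ∑ j, ∑ m, ∑ n, N i j m n * p0.1 i * p0.1 m * p0.2 j * p0.2 n,
    hpos p0.1 p0.2 hp0s.1 hp0s.2, fun ζ η => ?_⟩
  set lam := ∑ i, ∑ j, ∑ m, ∑ n, N i j m n * p0.1 i * p0.1 m * p0.2 j * p0.2 n with hlam
  have hlampos : 0 < lam := hpos p0.1 p0.2 hp0s.1 hp0s.2
  by_cases hζ0 : ζ = 0
  · subst hζ0
    have : ∀ i : Fin d, (0 : EuclideanSpace ℝ (Fin d)) i = 0 := fun i => rfl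
    simp [this]
  by_cases hη0 : η = 0
  · subst hη0
    have : ∀ i : Fin d, (0 : EuclideanSpace ℝ (Fin d)) i = 0 := fun i => rfl
    simp [this]
  have hζn : ‖ζ‖ ≠ 0 := norm_ne_zero_iff.mpr hζ0
  have hηn : ‖η‖ ≠ 0 := norm_ne_zero_iff.mpr hη0
  have hζ'1 : ‖(‖ζ‖⁻¹ • ζ)‖ = 1 := by
    rw [norm_smul, norm_inv, norm_norm, inv_mul_cancel₀ hζn]
  have hη'1 : ‖(‖η‖⁻¹ • η)‖ = 1 := by
    rw [norm_smul, norm_inv, norm_norm, inv_mul_cancel₀ hηn]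
  have hmem : ((‖ζ‖⁻¹ • ζ, ‖η‖⁻¹ • η) :
      EuclideanSpace ℝ (Fin d) × EuclideanSpace ℝ (Fin d)) ∈ K := by
    rw [hK]
    constructor <;> simp [hζ'1, hη'1]
  have hminval := isMinOn_iff.mp hmin (‖ζ‖⁻¹ • ζ, ‖η‖⁻¹ • η) hmem
  dsimp only at hminval
  rw [← hlam] at hminval
  have hkey := Fq_homog N ‖ζ‖ ‖η‖ (‖ζ‖⁻¹ • ζ) (‖η‖⁻¹ • η)
  have hz1 : ‖ζ‖ • (‖ζ‖⁻¹ • ζ) = ζ := by rw [smul_smul, mul_inv_cancel₀ hζn, one_smul]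
  have hz2 : ‖η‖ • (‖η‖⁻¹ • η) = η := by rw [smul_smul, mul_inv_cancel₀ hηn, one_smul]
  rw [hz1, hz2] at hkey
  rw [hkey]
  calc lam * ‖ζ‖ ^ 2 * ‖η‖ ^ 2
      ≤ (∑ i, ∑ j, ∑ m, ∑ n, N i j m n * (‖ζ‖⁻¹ • ζ) i * (‖ζ‖⁻¹ • ζ) m
          * (‖η‖⁻¹ • η) j * (‖η‖⁻¹ • η) n) * ‖ζ‖ ^ 2 * ‖η‖ ^ 2 :=
        mul_le_mul_of_nonneg_right
          (mul_le_mul_of_nonneg_right hminval (sq_nonneg _)) (sq_nonneg _)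
    _ = ‖ζ‖ ^ 2 * ‖η‖ ^ 2 * ∑ i, ∑ j, ∑ m, ∑ n, N i j m n * (‖ζ‖⁻¹ • ζ) i * (‖ζ‖⁻¹ • ζ) m
          * (‖η‖⁻¹ • η) j * (‖η‖⁻¹ • η) n := by ring
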